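/- Let Γ = (V,R) be a graph, I a set, and N a normal subgroup of G_Γ × C_2^I with N ∩ C_q^R = 1, where C_q^R is the subgroup of elements that are of the form (x,1,1) ∈ W in each edge coordinate and the identity in all vertex and I coordinates. Then every element ((a_v)_{v∈V}, (b_r)_{r∈R}, (c_i)_{i∈I}) of N satisfies: for every edge r = (v,v') ∈ R, τ(a_v) = τ(a_{v'}) and b_r = (1, a_v, a_{v'}). -/

import Mathlib

open Function

noncomputable section

/-- A discrete group is a topological group. -/
instance (priority := 50) discreteTopologicalGroup (G : Type*) [Group G] [TopologicalSpace G]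
    [DiscreteTopology G] : IsTopologicalGroup G where
  continuous_mul := continuous_of_discreteTopology
  continuous_inv := continuous_of_discreteTopology

/-- The sign epimorphism `τ : D_p → C_2 = {±1}` killing the rotations. -/
def dihedralSign (p : ℕ) : DihedralGroup p →* ℤˣ where
  toFun x := match x with
    | DihedralGroup.r _ => 1
    | DihedralGroup.sr _ => -1
  map_one' := rfl
  map_mul' a b := by cases a <;> cases b <;> rfl

/-- `{±1}` acts on a commutative group by exponentiation (i.e. `-1` acts by inversion). -/
def unitsIntAut (A : Type*) [CommGroup A] : ℤˣ →* MulAut A where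
  toFun u :=
    { toFun := fun x => x ^ (u : ℤ)
      invFun := fun x => x ^ (u : ℤ)
      left_inv := fun x => by rcases Int.units_eq_one_or u with h | h <;> simp [h]
      right_inv := fun x => by rcases Int.units_eq_one_or u with h | h <;> simp [h]
      map_mul' := fun x y => mul_zpow x y _ }
  map_one' := by ext x; simp
  map_mul' u v := by
    ext x
    rcases Int.units_eq_one_or u with h | h <;>
      rcases Int.units_eq_one_or v with h' | h' <;>
        simp [h, h']

/-- The action of `D_p × D_p` on `C_q` given by `(x,y) · g = g^(τ(x)τ(y))`. -/
def Wact (p q : ℕ) : DihedralGroup p × DihedralGroup p →* MulAut (Multiplicative (ZMod q)) :=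
  (unitsIntAut (Multiplicative (ZMod q))).comp
    (((dihedralSign p).comp (MonoidHom.fst _ _)) * ((dihedralSign p).comp (MonoidHom.snd _ _)))

/-- The group `W = C_q ⋊ (D_p × D_p)`. -/
abbrev Wgrp (p q : ℕ) : Type :=
  SemidirectProduct (Multiplicative (ZMod q)) (DihedralGroup p × DihedralGroup p) (Wact p q)

/-- The quotient map `λ : W → D_p × D_p`. -/
abbrev lamW (p q : ℕ) : Wgrp p q →* DihedralGroup p × DihedralGroup p :=
  SemidirectProduct.rightHom

/-- The group `G_Γ ≤ D_p^V × W^R` associated to a graph `Γ = (V, R)`. -/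
def GGamma (p q : ℕ) (V : Type*) (R : Set (V × V)) :
    Subgroup ((V → DihedralGroup p) × (R → Wgrp p q)) where
  carrier := {x | ∀ r : R,
    SemidirectProduct.rightHom (x.2 r) = (x.1 (r : V × V).1, x.1 (r : V × V).2)}
  one_mem' := by intro r; simp <;> rfl
  mul_mem' := by
    intro a b ha hb r
    simp only [Set.mem_setOf_eq] at ha hb
    simp only [Prod.snd_mul, Pi.mul_apply, map_mul, Prod.fst_mul, ha r, hb r, Prod.mk_mul_mk]
  inv_mem' := by
    intro a ha r
    simp only [Set.mem_setOf_eq] at ha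
    simp only [Prod.snd_inv, Pi.inv_apply, map_inv, Prod.fst_inv, ha r, Prod.inv_mk]

instance (n : ℕ) : TopologicalSpace (DihedralGroup n) := ⊥
instance (n : ℕ) : DiscreteTopology (DihedralGroup n) := ⟨rfl⟩
instance (p q : ℕ) : TopologicalSpace (Wgrp p q) := ⊥
instance (p q : ℕ) : DiscreteTopology (Wgrp p q) := ⟨rfl⟩

variable (p q : ℕ) (V : Type*) (R : Set (V × V))

/-- The coordinate projection `π_v : G_Γ → D_p` at a vertex `v`. -/
def vProj (v : V) : ↥(GGamma p q V R) →* DihedralGroup p :=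
  (Pi.evalMonoidHom (fun _ : V => DihedralGroup p) v).comp
    ((MonoidHom.fst _ _).comp (GGamma p q V R).subtype)

/-- The coordinate projection `π_r : G_Γ → W` at an edge `r`. -/
def eProj (r : R) : ↥(GGamma p q V R) →* Wgrp p q :=
  (Pi.evalMonoidHom (fun _ : R => Wgrp p q) r).comp
    ((MonoidHom.snd _ _).comp (GGamma p q V R).subtype)

variable (I : Type*)

/-- The coordinate projection `π_v : G_Γ × C_2^I → D_p` at a vertex `v`. -/
def vProjK (v : V) : (↥(GGamma p q V R) × (I → ℤˣ)) →* DihedralGroup p :=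
  (vProj p q V R v).comp (MonoidHom.fst _ _)

/-- The coordinate projection `π_r : G_Γ × C_2^I → W` at an edge `r`. -/
def eProjK (r : R) : (↥(GGamma p q V R) × (I → ℤˣ)) →* Wgrp p q :=
  (eProj p q V R r).comp (MonoidHom.fst _ _)

/-- The map `ξ_Γ : G_Γ → C_2^V`, `((a_v), (b_r)) ↦ (τ(a_v))_v`. -/
def xiGamma : ↥(GGamma p q V R) →* (V → ℤˣ) :=
  Pi.monoidHom fun v => (dihedralSign p).comp (vProj p q V R v)

end
noncomputable section
variable (p q : ℕ) (V : Type*) (R : Set (V × V))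

/-- The edge set of the induced subgraph on a set `V₀` of vertices. -/
def inducedR (V0 : Set V) : Set (↥V0 × ↥V0) := {e | ((e.1 : V), (e.2 : V)) ∈ R}

/-- The coordinate projection `π_{Γ₀} : G_Γ → G_{Γ₀}` onto the group of an induced
subgraph. -/
def projGGamma (V0 : Set V) :
    ↥(GGamma p q V R) →* ↥(GGamma p q ↥V0 (inducedR V R V0)) :=
  MonoidHom.codRestrict
    ((MonoidHom.prod
      ((Pi.monoidHom fun v : ↥V0 =>
        Pi.evalMonoidHom (fun _ : V => DihedralGroup p) (v : V)).comp (MonoidHom.fst _ _))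
      ((Pi.monoidHom fun e : inducedR V R V0 =>
        Pi.evalMonoidHom (fun _ : R => Wgrp p q)
          (⟨(((e : ↥V0 × ↥V0).1 : V), ((e : ↥V0 × ↥V0).2 : V)), e.2⟩ : R)).comp
        (MonoidHom.snd _ _))).comp (GGamma p q V R).subtype)
    (GGamma p q ↥V0 (inducedR V R V0))
    (fun x => by
      intro e
      exact x.2 ⟨(((e : ↥V0 × ↥V0).1 : V), ((e : ↥V0 × ↥V0).2 : V)), e.2⟩)
end
noncomputable section
variable (p q : ℕ) (V : Type*) (R : Set (V × V))

/-- The edge component of the embedding `g ↦ (g)_v`. -/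
def vertEmbW [DecidableEq V] (v : V) (r : V × V) : DihedralGroup p →* Wgrp p q :=
  SemidirectProduct.inr.comp
    (MonoidHom.prod (if r.1 = v then MonoidHom.id _ else 1) (if r.2 = v then MonoidHom.id _ else 1))

/-- The embedding `g ↦ (g)_v : D_p → G_Γ` associated to a vertex `v`. -/
def vertEmb [DecidableEq V] (v : V) : DihedralGroup p →* ↥(GGamma p q V R) :=
  MonoidHom.codRestrict
    (MonoidHom.prod
      (Pi.monoidHom fun w : V => if w = v then MonoidHom.id (DihedralGroup p) else 1)
      (Pi.monoidHom fun r : R => vertEmbW p q V v (r : V × V)))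
    (GGamma p q V R)
    (fun g => by
      intro r
      by_cases h1 : (r : V × V).1 = v <;> by_cases h2 : (r : V × V).2 = v <;>
        simp [vertEmbW, h1, h2, Pi.monoidHom]
      )

/-- The embedding `g ↦ (g)_v : D_p → G_Γ × C_2^I`. -/
def vertEmbK (I : Type*) [DecidableEq V] (v : V) :
    DihedralGroup p →* (↥(GGamma p q V R) × (I → ℤˣ)) :=
  MonoidHom.prod (vertEmb p q V R v) 1

/-- The embedding `C_q → G_Γ` associated to an edge `r`. -/
def edgeEmb [DecidableEq V] (r : R) : Multiplicative (ZMod q) →* ↥(GGamma p q V R) :=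
  MonoidHom.codRestrict
    (MonoidHom.prod (1 : Multiplicative (ZMod q) →* (V → DihedralGroup p))
      (Pi.monoidHom fun r' : R => if r' = r then SemidirectProduct.inl else 1))
    (GGamma p q V R)
    (fun a => by
      intro r'
      by_cases h : r' = r <;> simp [h, Pi.monoidHom] <;> rfl)

/-- The embedding `C_q → G_Γ × C_2^I` associated to an edge `r`. -/
def edgeEmbK (I : Type*) [DecidableEq V] (r : R) :
    Multiplicative (ZMod q) →* (↥(GGamma p q V R) × (I → ℤˣ)) :=
  MonoidHom.prod (edgeEmb p q V R r) 1

/-- The embedding `C_q^R → G_Γ × C_2^I` of the product of all edge `C_q`'s. -/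
def cqREmbK (I : Type*) : (R → Multiplicative (ZMod q)) →* (↥(GGamma p q V R) × (I → ℤˣ)) :=
  MonoidHom.prod
    (MonoidHom.codRestrict
      (MonoidHom.prod (1 : (R → Multiplicative (ZMod q)) →* (V → DihedralGroup p))
        (Pi.monoidHom fun r : R =>
          SemidirectProduct.inl.comp (Pi.evalMonoidHom (fun _ : R => Multiplicative (ZMod q)) r)))
      (GGamma p q V R)
      (fun a => by intro r; simp [Pi.monoidHom] <;> rfl))
    1
end


section aux9
open SemidirectProduct DihedralGroup

variable (p q : ℕ)

lemma dihedralSign_r (i : ZMod p) : dihedralSign p (DihedralGroup.r i) = 1 := rfl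
lemma dihedralSign_sr (i : ZMod p) : dihedralSign p (DihedralGroup.sr i) = -1 := rfl

lemma r_pow' (i : ZMod p) (n : ℕ) : (DihedralGroup.r i : DihedralGroup p) ^ n
    = DihedralGroup.r (n • i) := by
  induction n with
  | zero => rw [pow_zero, zero_smul, DihedralGroup.one_def]
  | succ n ih => rw [pow_succ, ih, DihedralGroup.r_mul_r, succ_nsmul]

lemma sign_one_pow (d : DihedralGroup p) (hd : dihedralSign p d = 1) : d ^ p = 1 := by
  cases d with
  | r i => rw [r_pow', nsmul_eq_mul, ZMod.natCast_self, zero_mul, ← DihedralGroup.one_def]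
  | sr i => exact absurd hd (by simp [dihedralSign_sr])

lemma Wact_apply (w : DihedralGroup p × DihedralGroup p) (n : Multiplicative (ZMod q)) :
    Wact p q w n = n ^ ((dihedralSign p w.1 * dihedralSign p w.2 : ℤˣ) : ℤ) := rfl

lemma wgrp_right_pow (z : Wgrp p q) (n : ℕ) : (z ^ n).right = z.right ^ n := by
  induction n with
  | zero => rfl
  | succ n ih => rw [pow_succ, pow_succ, SemidirectProduct.mul_right, ih]

lemma wgrp_left_pow (z : Wgrp p q)
    (hz : dihedralSign p z.right.1 * dihedralSign p z.right.2 = 1) (n : ℕ) :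
    (z ^ n).left = z.left ^ n := by
  induction n with
  | zero => rw [pow_zero, pow_zero]; rfl
  | succ n ih =>
    rw [pow_succ, SemidirectProduct.mul_left, ih, Wact_apply, wgrp_right_pow]
    have : dihedralSign p ((z.right ^ n).1) * dihedralSign p ((z.right ^ n).2) = 1 := by
      rw [Prod.pow_fst, Prod.pow_snd, map_pow, map_pow, ← mul_pow, hz, one_pow]
    rw [this, pow_succ]
    simp

lemma conj_inl_comm (z : Wgrp p q) (t : Multiplicative (ZMod q)) :
    z * inl t * z⁻¹ * (inl t)⁻¹ =
      inl (t ^ ((dihedralSign p z.right.1 * dihedralSign p z.right.2 : ℤˣ) : ℤ) * t⁻¹) := by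
  rcases Int.units_eq_one_or (dihedralSign p z.right.1) with h1 | h1 <;>
    rcases Int.units_eq_one_or (dihedralSign p z.right.2) with h2 | h2 <;>
      ext <;>
        simp [SemidirectProduct.mul_left, SemidirectProduct.inv_left,
          SemidirectProduct.left_inl, SemidirectProduct.right_inl, SemidirectProduct.mul_right,
          SemidirectProduct.inv_right, Wact_apply, h1, h2, Prod.fst_inv, Prod.snd_inv,
          Prod.fst_mul, Prod.snd_mul, map_inv, map_mul, mul_comm, mul_left_comm]

lemma conj_inr_left (z : Wgrp p q) (g : DihedralGroup p) :
    (inr (g, 1) * z * (inr (g, 1))⁻¹ * z⁻¹).left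
      = z.left ^ ((dihedralSign p g : ℤˣ) : ℤ) * z.left⁻¹ := by
  simp only [SemidirectProduct.mul_left, SemidirectProduct.inv_left,
    SemidirectProduct.left_inr, SemidirectProduct.right_inr, SemidirectProduct.mul_right,
    SemidirectProduct.inv_right, Wact_apply, mul_one, one_mul, map_one]
  rcases Int.units_eq_one_or (dihedralSign p g) with hg | hg <;>
    rcases Int.units_eq_one_or (dihedralSign p z.right.1) with h1 | h1 <;>
      rcases Int.units_eq_one_or (dihedralSign p z.right.2) with h2 | h2 <;>
        simp [hg, h1, h2, Prod.fst_inv, Prod.snd_inv, Prod.fst_mul, Prod.snd_mul,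
          map_inv, map_mul, mul_comm, mul_left_comm]

lemma conj_inr_right (z : Wgrp p q) (u : DihedralGroup p × DihedralGroup p) :
    (inr u * z * (inr u)⁻¹ * z⁻¹).right = u * z.right * u⁻¹ * z.right⁻¹ := by
  simp [SemidirectProduct.mul_right, SemidirectProduct.inv_right]

end aux9

section aux10
open SemidirectProduct
variable (p q : ℕ) (V : Type) (R : Set (V × V)) (I : Type) [DecidableEq V]

lemma edgeEmbK_snd (r : R) (t : Multiplicative (ZMod q)) :
    (edgeEmbK p q V R I r t).2 = 1 := rfl

lemma edgeEmbK_fst_coe_fst (r : R) (t : Multiplicative (ZMod q)) :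
    ((edgeEmbK p q V R I r t).1 : (V → DihedralGroup p) × (R → Wgrp p q)).1 = 1 := rfl

lemma edgeEmbK_fst_coe_snd (r r' : R) (t : Multiplicative (ZMod q)) :
    ((edgeEmbK p q V R I r t).1 : (V → DihedralGroup p) × (R → Wgrp p q)).2 r' =
      if r' = r then inl t else 1 := by
  by_cases h : r' = r <;> simp [edgeEmbK, edgeEmb, Pi.monoidHom, h]

lemma vertEmbK_snd (v : V) (g : DihedralGroup p) : (vertEmbK p q V R I v g).2 = 1 := rfl

lemma vertEmbK_fst_coe_fst (v w : V) (g : DihedralGroup p) :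
    ((vertEmbK p q V R I v g).1 : (V → DihedralGroup p) × (R → Wgrp p q)).1 w =
      if w = v then g else 1 := by
  by_cases h : w = v <;> simp [vertEmbK, vertEmb, Pi.monoidHom, h]

lemma vertEmbK_fst_coe_snd (v : V) (r' : R) (g : DihedralGroup p) :
    ((vertEmbK p q V R I v g).1 : (V → DihedralGroup p) × (R → Wgrp p q)).2 r' =
      inr (if (r' : V × V).1 = v then g else 1, if (r' : V × V).2 = v then g else 1) := by
  by_cases h1 : (r' : V × V).1 = v <;> by_cases h2 : (r' : V × V).2 = v <;>
    simp [vertEmbK, vertEmb, vertEmbW, Pi.monoidHom, h1, h2]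

lemma mem_cqREmbK_range (z : ↥(GGamma p q V R) × (I → ℤˣ))
    (h2 : z.2 = 1)
    (h1 : (z.1 : (V → DihedralGroup p) × (R → Wgrp p q)).1 = 1)
    (hr : ∀ r : R, ((z.1 : (V → DihedralGroup p) × (R → Wgrp p q)).2 r).right = 1) :
    z ∈ (cqREmbK p q V R I).range := by
  refine ⟨fun r => ((z.1 : (V → DihedralGroup p) × (R → Wgrp p q)).2 r).left, ?_⟩
  have key : ((cqREmbK p q V R I
      (fun r => ((z.1 : (V → DihedralGroup p) × (R → Wgrp p q)).2 r).left)).1 :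
      (V → DihedralGroup p) × (R → Wgrp p q)) =
      (z.1 : (V → DihedralGroup p) × (R → Wgrp p q)) := by
    refine Prod.ext ?_ ?_
    · exact h1.symm
    · funext r
      have hl : (((cqREmbK p q V R I
          (fun r => ((z.1 : (V → DihedralGroup p) × (R → Wgrp p q)).2 r).left)).1 :
          (V → DihedralGroup p) × (R → Wgrp p q)).2 r) =
          inl ((z.1 : (V → DihedralGroup p) × (R → Wgrp p q)).2 r).left := rfl
      rw [hl]
      conv_rhs => rw [← inl_left_mul_inr_right
        ((z.1 : (V → DihedralGroup p) × (R → Wgrp p q)).2 r)]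
      rw [hr r, map_one, mul_one]
  refine Prod.ext (Subtype.ext ?_) ?_
  · exact key
  · exact h2.symm
end aux10

section aux11
open SemidirectProduct

lemma units_comm_one (u w : ℤˣ) : u * w * u⁻¹ * w⁻¹ = 1 := by
  rcases Int.units_eq_one_or u with h | h <;> rcases Int.units_eq_one_or w with h' | h' <;>
    simp [h, h']

lemma comm_pow_one (p : ℕ) (g d : DihedralGroup p) : (g * d * g⁻¹ * d⁻¹) ^ p = 1 := by
  apply sign_one_pow
  rw [map_mul, map_mul, map_mul, map_inv, map_inv]
  exact units_comm_one _ _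

lemma comm_pow_one_pair (p : ℕ) (u w : DihedralGroup p × DihedralGroup p) :
    (u * w * u⁻¹ * w⁻¹) ^ p = 1 := by
  refine Prod.ext ?_ ?_ <;>
    simp only [Prod.pow_fst, Prod.pow_snd, Prod.fst_mul, Prod.snd_mul, Prod.fst_inv,
      Prod.snd_inv, Prod.fst_one, Prod.snd_one] <;>
    exact comm_pow_one ..

lemma sign_comm_one (p : ℕ) (g d : DihedralGroup p) :
    dihedralSign p (g * d * g⁻¹ * d⁻¹) = 1 := by
  rw [map_mul, map_mul, map_mul, map_inv, map_inv]
  exact units_comm_one _ _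
end aux11


section mainproof
open SemidirectProduct

set_option maxHeartbeats 1000000 in
/-- Let `Γ = (V, R)` be a graph, `I` a set, and `N` a normal subgroup of
`G_Γ × C_2^I` with `N ∩ C_q^R = 1`, where `C_q^R` is the subgroup of elements of the form
`(x,1,1) ∈ W` in each edge coordinate and the identity in all vertex and `I` coordinates.
Then every element of `N` satisfies: for every edge `r = (v, v')`, `τ(a_v) = τ(a_{v'})` and
`b_r = (1, a_v, a_{v'})`. -/
theorem statement_9 (p q : ℕ) (hp : p.Prime) (hq : q.Prime) (hpo : Odd p) (hqo : Odd q)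
    (hpq : p ≠ q) (V I : Type) (R : Set (V × V))
    (hloop : ∀ v : V, (v, v) ∉ R) (hor : ∀ a b : V, (a, b) ∈ R → (b, a) ∉ R)
    (N : Subgroup (↥(GGamma p q V R) × (I → ℤˣ))) [N.Normal]
    (hN : N ⊓ (cqREmbK p q V R I).range = ⊥) :
    ∀ x ∈ N, ∀ r : R,
      dihedralSign p ((x.1 : (V → DihedralGroup p) × (R → Wgrp p q)).1 (r : V × V).1) =
        dihedralSign p ((x.1 : (V → DihedralGroup p) × (R → Wgrp p q)).1 (r : V × V).2) ∧
      (x.1 : (V → DihedralGroup p) × (R → Wgrp p q)).2 r =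
        SemidirectProduct.inr
          ((x.1 : (V → DihedralGroup p) × (R → Wgrp p q)).1 (r : V × V).1,
           (x.1 : (V → DihedralGroup p) × (R → Wgrp p q)).1 (r : V × V).2) := by
  classical
  intro x hx r
  obtain ⟨⟨v, v'⟩, hrR⟩ := r
  set a : V → DihedralGroup p := (x.1 : (V → DihedralGroup p) × (R → Wgrp p q)).1 with ha
  set b : R → Wgrp p q := (x.1 : (V → DihedralGroup p) × (R → Wgrp p q)).2 with hb
  set rr : R := ⟨(v, v'), hrR⟩ with hrr
  have hvv' : v' ≠ v := by
    intro h
    rw [h] at hrR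
    exact hloop v hrR
  have hmem : ∀ s : R, (b s).right = (a (s : V × V).1, a (s : V × V).2) := x.1.2
  have hbr : (b rr).right = (a v, a v') := hmem rr
  -- auxiliary fact: q is not 2
  have hq2 : ((2 : ℕ) : ZMod q) ≠ 0 := by
    rw [Ne, ZMod.natCast_eq_zero_iff]
    intro hdvd
    have : q = 2 := (Nat.prime_dvd_prime_iff_eq hq Nat.prime_two).mp hdvd
    rw [this] at hqo
    exact (by decide : ¬ Odd 2) hqo
  -- Part 1
  set t : Multiplicative (ZMod q) := Multiplicative.ofAdd (1 : ZMod q) with ht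
  set e := edgeEmbK p q V R I rr t with he
  set y := x * e * x⁻¹ * e⁻¹ with hy
  have hyN : y ∈ N := by
    have h1 : e * x⁻¹ * e⁻¹ ∈ N := Subgroup.Normal.conj_mem ‹N.Normal› _ (N.inv_mem hx) e
    have h2 := N.mul_mem hx h1
    have h3 : y = x * (e * x⁻¹ * e⁻¹) := by rw [hy]; group
    rwa [h3]
  have hyR : y ∈ (cqREmbK p q V R I).range := by
    refine mem_cqREmbK_range p q V R I y ?_ ?_ ?_
    · rw [hy]
      simp [Prod.snd_mul, Prod.snd_inv, edgeEmbK_snd]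
    · rw [hy]
      funext w
      simp [he, Prod.fst_mul, Prod.fst_inv, Pi.mul_apply, Pi.inv_apply, edgeEmbK_fst_coe_fst]
    · intro s
      have hes : (((e.1 : (V → DihedralGroup p) × (R → Wgrp p q))).2 s).right = 1 := by
        rw [he, edgeEmbK_fst_coe_snd]
        split_ifs <;> simp
      rw [hy]
      simp [Prod.snd_mul, Prod.snd_inv, Pi.mul_apply, Pi.inv_apply,
        SemidirectProduct.mul_right, SemidirectProduct.inv_right, hes]
  have hy1 : y = 1 := by
    have hmem2 : y ∈ N ⊓ (cqREmbK p q V R I).range := ⟨hyN, hyR⟩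
    rwa [hN, Subgroup.mem_bot] at hmem2
  have hcoord : ((y.1 : (V → DihedralGroup p) × (R → Wgrp p q)).2) rr = 1 := by
    rw [hy1]; rfl
  have hexp : ((y.1 : (V → DihedralGroup p) × (R → Wgrp p q)).2) rr =
      b rr * inl t * (b rr)⁻¹ * (inl t)⁻¹ := by
    rw [hy]
    simp [he, Prod.snd_mul, Prod.snd_inv, Pi.mul_apply, Pi.inv_apply, edgeEmbK_fst_coe_snd,
      ← hb]
  rw [hexp, conj_inl_comm] at hcoord
  have heq : t ^ ((dihedralSign p (b rr).right.1 * dihedralSign p (b rr).right.2 : ℤˣ) : ℤ)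
      * t⁻¹ = 1 := by
    have h4 : (inl (t ^ ((dihedralSign p (b rr).right.1 * dihedralSign p (b rr).right.2 :
        ℤˣ) : ℤ) * t⁻¹) : Wgrp p q) = inl (1 : Multiplicative (ZMod q)) := by rw [hcoord]; simp
    exact SemidirectProduct.inl_injective h4
  rw [hbr] at heq
  have hprod : dihedralSign p (a v) * dihedralSign p (a v') = 1 := by
    by_contra hne
    have hm1 : dihedralSign p (a v) * dihedralSign p (a v') = -1 := by
      rcases Int.units_eq_one_or (dihedralSign p (a v) * dihedralSign p (a v')) with h | h
      · exact absurd h hne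
      · exact h
    rw [hm1] at heq
    have h3 := congrArg Multiplicative.toAdd heq
    simp [ht] at h3
    apply hq2
    push_cast
    linear_combination -h3
  have hsign : dihedralSign p (a v) = dihedralSign p (a v') := by
    rcases Int.units_eq_one_or (dihedralSign p (a v)) with h1 | h1 <;>
      rcases Int.units_eq_one_or (dihedralSign p (a v')) with h2 | h2 <;>
        rw [h1, h2] <;> rw [h1, h2] at hprod <;> simp at hprod
  refine ⟨hsign, ?_⟩
  set g0 : DihedralGroup p := DihedralGroup.sr 0 with hg0
  set hh := vertEmbK p q V R I v g0 with hhh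
  set c := hh * x * hh⁻¹ * x⁻¹ with hc
  have hcN : c ∈ N := by
    have h1 : hh * x * hh⁻¹ ∈ N := Subgroup.Normal.conj_mem ‹N.Normal› _ hx hh
    exact N.mul_mem h1 (N.inv_mem hx)
  have hcedge : ∀ s : R, ((c.1 : (V → DihedralGroup p) × (R → Wgrp p q)).2) s =
      inr (if (s : V × V).1 = v then g0 else 1, if (s : V × V).2 = v then g0 else 1)
        * b s * (inr (if (s : V × V).1 = v then g0 else 1,
          if (s : V × V).2 = v then g0 else 1))⁻¹ * (b s)⁻¹ := by
    intro s
    rw [hc]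
    simp [hhh, Prod.snd_mul, Prod.snd_inv, Pi.mul_apply, Pi.inv_apply, vertEmbK_fst_coe_snd,
      ← hb]
  have hcvert : ∀ w : V, ((c.1 : (V → DihedralGroup p) × (R → Wgrp p q)).1) w =
      (if w = v then g0 else 1) * a w * (if w = v then g0 else 1)⁻¹ * (a w)⁻¹ := by
    intro w
    rw [hc]
    simp [hhh, Prod.fst_mul, Prod.fst_inv, Pi.mul_apply, Pi.inv_apply, vertEmbK_fst_coe_fst,
      ← ha]
  have hcp1 : c ^ p = 1 := by
    have hcpN : c ^ p ∈ N := pow_mem hcN p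
    have hcpR : c ^ p ∈ (cqREmbK p q V R I).range := by
      refine mem_cqREmbK_range p q V R I _ ?_ ?_ ?_
      · have hc2 : c.2 = 1 := by
          rw [hc]
          simp [hhh, Prod.snd_mul, Prod.snd_inv, vertEmbK_snd]
        rw [Prod.pow_snd, hc2, one_pow]
      · funext w
        have h6 : ((c ^ p).1 : (V → DihedralGroup p) × (R → Wgrp p q)).1 w
            = (((c.1 : (V → DihedralGroup p) × (R → Wgrp p q)).1) w) ^ p := by
          rw [Prod.pow_fst, SubmonoidClass.coe_pow, Prod.pow_fst, Pi.pow_apply]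
        rw [h6, hcvert w, Pi.one_apply]
        exact comm_pow_one p _ _
      · intro s
        have h7 : ((c ^ p).1 : (V → DihedralGroup p) × (R → Wgrp p q)).2 s
            = (((c.1 : (V → DihedralGroup p) × (R → Wgrp p q)).2) s) ^ p := by
          rw [Prod.pow_fst, SubmonoidClass.coe_pow, Prod.pow_snd, Pi.pow_apply]
        rw [h7, wgrp_right_pow, hcedge s, conj_inr_right]
        exact comm_pow_one_pair p _ _
    have hm : c ^ p ∈ N ⊓ (cqREmbK p q V R I).range := ⟨hcpN, hcpR⟩
    rwa [hN, Subgroup.mem_bot] at hm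
  have hzc : ((c.1 : (V → DihedralGroup p) × (R → Wgrp p q)).2) rr =
      inr (g0, 1) * b rr * (inr (g0, 1))⁻¹ * (b rr)⁻¹ := by
    have h8 : (if (↑rr : V × V).1 = v then g0 else 1) = g0 := if_pos rfl
    have h9 : (if (↑rr : V × V).2 = v then g0 else 1) = 1 := if_neg hvv'
    rw [hcedge rr, h8, h9]
  have hzcp : (((c.1 : (V → DihedralGroup p) × (R → Wgrp p q)).2) rr) ^ p = 1 := by
    have h7 : ((c ^ p).1 : (V → DihedralGroup p) × (R → Wgrp p q)).2 rr
        = (((c.1 : (V → DihedralGroup p) × (R → Wgrp p q)).2) rr) ^ p := by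
      rw [Prod.pow_fst, SubmonoidClass.coe_pow, Prod.pow_snd, Pi.pow_apply]
    rw [← h7, hcp1]
    rfl
  have hsgncond : dihedralSign p ((((c.1 : (V → DihedralGroup p) × (R → Wgrp p q)).2)
        rr).right.1) *
      dihedralSign p ((((c.1 : (V → DihedralGroup p) × (R → Wgrp p q)).2) rr).right.2) = 1 := by
    rw [hzc, conj_inr_right]
    simp only [Prod.fst_mul, Prod.snd_mul, Prod.fst_inv, Prod.snd_inv]
    rw [sign_comm_one, sign_comm_one, one_mul]
  have hleft : ((((c.1 : (V → DihedralGroup p) × (R → Wgrp p q)).2) rr).left) ^ p = 1 := by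
    rw [← wgrp_left_pow p q _ hsgncond, hzcp]
    rfl
  rw [hzc, conj_inr_left] at hleft
  have hsr : dihedralSign p g0 = -1 := rfl
  rw [hsr] at hleft
  have h10 : (b rr).left ^ (2 * p) = 1 := by
    have h11 : ((b rr).left ^ ((-1 : ℤˣ) : ℤ) * (b rr).left⁻¹) ^ p
        = ((b rr).left ^ (2 * p))⁻¹ := by
      simp only [Units.val_neg, Units.val_one]
      group
    rw [h11, inv_eq_one] at hleft
    exact hleft
  have h12 : ((2 * p : ℕ) : ZMod q) * Multiplicative.toAdd ((b rr).left) = 0 := by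
    have h13 := congrArg Multiplicative.toAdd h10
    simpa [toAdd_pow, nsmul_eq_mul] using h13
  have h14 : ((2 * p : ℕ) : ZMod q) ≠ 0 := by
    rw [Ne, ZMod.natCast_eq_zero_iff]
    intro hdvd
    rcases (Nat.Prime.dvd_mul hq).mp hdvd with h | h
    · have h2q : q = 2 := (Nat.prime_dvd_prime_iff_eq hq Nat.prime_two).mp h
      rw [h2q] at hqo
      exact (by decide : ¬ Odd 2) hqo
    · exact hpq ((Nat.prime_dvd_prime_iff_eq hq hp).mp h).symm
  haveI : Fact q.Prime := ⟨hq⟩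
  have h15 : Multiplicative.toAdd ((b rr).left) = 0 := by
    rcases mul_eq_zero.mp h12 with h | h
    · exact absurd h h14
    · exact h
  have h16 : (b rr).left = 1 := toAdd_eq_zero.mp h15
  conv_lhs => rw [← inl_left_mul_inr_right (b rr)]
  rw [h16, map_one, one_mul, hbr]

end mainproof
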